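/- Let X be a real m×n matrix whose columns are partitioned as X = [X₁, X₂, ..., X_k], where every column of X_i lies in a linear subspace S_i of ℝ^m, the subspaces S₁, ..., S_k are independent, and X_i has d_i columns with rank(X_i) = r_i. Then the i-th diagonal block of SIM(X) (the d_i×d_i principal submatrix of SIM(X) indexed by the columns of X_i) has rank equal to r_i. -/

import Mathlib

open Matrix

/-- The nuclear norm of a real matrix: the sum of its singular values
(the square roots of the eigenvalues of `Aᵀ * A`). -/
noncomputable def nuclearNorm {m n : Type*} [Fintype m] [Fintype n] [DecidableEq n]
    (A : Matrix m n ℝ) : ℝ :=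
  ∑ i, Real.sqrt ((show (Aᵀ * A).IsHermitian by
    simpa [Matrix.conjTranspose_eq_transpose_of_trivial] using
      Matrix.isHermitian_conjTranspose_mul_self A).eigenvalues i)

/-- The shape interaction matrix of a real `m × n` matrix `X`: the `n × n`
orthogonal projection matrix onto the row space of `X`. -/
noncomputable def SIM {m n : ℕ} (X : Matrix (Fin m) (Fin n) ℝ) :
    Matrix (Fin n) (Fin n) ℝ :=
  let U : Submodule ℝ (EuclideanSpace ℝ (Fin n)) :=
    Submodule.span ℝ (Set.range fun i => (WithLp.toLp 2 (X i) : EuclideanSpace ℝ (Fin n)))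
  LinearMap.toMatrix'
    ((WithLp.linearEquiv 2 ℝ (Fin n → ℝ)).toLinearMap ∘ₗ
      ((U.subtypeL.comp (U.orthogonalProjectionOnto)).toLinearMap :
        EuclideanSpace ℝ (Fin n) →ₗ[ℝ] EuclideanSpace ℝ (Fin n)) ∘ₗ
      (WithLp.linearEquiv 2 ℝ (Fin n → ℝ)).symm.toLinearMap :
      (Fin n → ℝ) →ₗ[ℝ] (Fin n → ℝ))

open Submodule Module
open scoped RealInnerProductSpace


-- extension by zero
noncomputable def extz {n : ℕ} (p : Fin n → Prop) [DecidablePred p] :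
    EuclideanSpace ℝ {j // p j} →ₗ[ℝ] EuclideanSpace ℝ (Fin n) where
  toFun v := WithLp.toLp 2 (fun j => if h : p j then v ⟨j, h⟩ else 0)
  map_add' v w := by ext j; by_cases h : p j <;> simp [h]
  map_smul' t v := by ext j; by_cases h : p j <;> simp [h]

lemma sum_block {n k : ℕ} (c : Fin n → Fin k) (i : Fin k) (f : Fin n → ℝ)
    (hf : ∀ j, c j ≠ i → f j = 0) :
    ∑ j, f j = ∑ a : {j // c j = i}, f a := by
  rw [← Finset.sum_subtype (Finset.univ.filter fun j => c j = i) (by simp) f]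
  refine (Finset.sum_filter_of_ne ?_).symm
  intro j _ hj
  by_contra hc
  exact hj (hf j hc)

lemma exists_functional {m k : ℕ} (S : Fin k → Submodule ℝ (Fin m → ℝ)) (hind : iSupIndep S)
    (i : Fin k) (y : Fin m) :
    ∃ φ : (Fin m → ℝ) →ₗ[ℝ] ℝ,
      (∀ v ∈ S i, φ v = v y) ∧ ∀ i' ≠ i, ∀ v ∈ S i', φ v = 0 := by
  set T' : Submodule ℝ (Fin m → ℝ) := ⨆ j, ⨆ _ : j ≠ i, S j with hT'
  have hdisj : Disjoint (S i) T' := hind i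
  set e : S i →ₗ[ℝ] ((Fin m → ℝ) ⧸ T') := T'.mkQ.comp (S i).subtype with he
  have hinj : Function.Injective e := by
    intro v w hvw
    have hvw' : Submodule.Quotient.mk (p := T') (v : Fin m → ℝ) = Submodule.Quotient.mk (w : Fin m → ℝ) := hvw
    have : (v : Fin m → ℝ) - w ∈ T' := (Submodule.Quotient.eq T').mp hvw'
    have hm : (v : Fin m → ℝ) - w ∈ S i := sub_mem v.2 w.2
    have := hdisj.le_bot ⟨hm, this⟩
    exact Subtype.ext (by simpa [sub_eq_zero] using this)
  set equiv := LinearEquiv.ofInjective e hinj with hequiv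
  set f0 : S i →ₗ[ℝ] ℝ := (LinearMap.proj y).comp (S i).subtype with hf0
  obtain ⟨g, hg⟩ := LinearMap.exists_extend (f0.comp (equiv.symm : LinearMap.range e →ₗ[ℝ] S i))
  refine ⟨g.comp T'.mkQ, ?_, ?_⟩
  · intro v hv
    have h1 : T'.mkQ v = (LinearMap.range e).subtype (equiv ⟨v, hv⟩) := by
      simp [hequiv, he, LinearEquiv.ofInjective_apply]
    calc g (T'.mkQ v) = (g.comp (LinearMap.range e).subtype) (equiv ⟨v, hv⟩) := by
          rw [LinearMap.comp_apply, ← h1]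
      _ = f0 (equiv.symm (equiv ⟨v, hv⟩)) := by rw [hg]; simp
      _ = v y := by simp [hf0]
  · intro i' hi' v hv
    have hvT' : v ∈ T' := by
      refine Submodule.mem_iSup_of_mem i' ?_
      exact Submodule.mem_iSup_of_mem hi' hv
    have : T'.mkQ v = 0 := (Submodule.Quotient.mk_eq_zero T').mpr hvT'
    simp [LinearMap.comp_apply, this]

lemma blockrow_mem {m n k : ℕ} (X : Matrix (Fin m) (Fin n) ℝ)
    (S : Fin k → Submodule ℝ (Fin m → ℝ)) (c : Fin n → Fin k)
    (hcol : ∀ j : Fin n, (fun s => X s j) ∈ S (c j))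
    (hind : iSupIndep S) (i : Fin k) (y : Fin m) :
    (fun j => if c j = i then X y j else 0) ∈ Submodule.span ℝ (Set.range X) := by
  obtain ⟨φ, h1, h2⟩ := exists_functional S hind i y
  have key : (fun j => if c j = i then X y j else 0) = fun j => φ (fun s => X s j) := by
    funext j
    by_cases h : c j = i
    · rw [if_pos h]
      exact (h1 _ (h ▸ hcol j)).symm
    · rw [if_neg h]
      exact (h2 (c j) h _ (hcol j)).symm
  rw [key]
  have h3 : (fun j => φ (fun s => X s j)) = ∑ s, φ (Pi.single s 1) • X s := by
    funext j
    have : (fun s => X s j) = ∑ s : Fin m, (X s j) • (Pi.single s (1 : ℝ) : Fin m → ℝ) := by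
      funext t
      simp [Finset.sum_apply, Pi.single_apply]
    rw [this, map_sum]
    simp [Finset.sum_apply, mul_comm]
  rw [h3]
  exact Submodule.sum_mem _ fun s _ =>
    Submodule.smul_mem _ _ (Submodule.subset_span ⟨s, rfl⟩)

noncomputable def projMat {q : Type*} [Fintype q] [DecidableEq q]
    (V : Submodule ℝ (EuclideanSpace ℝ q)) : Matrix q q ℝ :=
  LinearMap.toMatrix'
    ((WithLp.linearEquiv 2 ℝ (q → ℝ)).toLinearMap ∘ₗ
      ((V.subtypeL.comp (V.orthogonalProjectionOnto)).toLinearMap :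
        EuclideanSpace ℝ q →ₗ[ℝ] EuclideanSpace ℝ q) ∘ₗ
      (WithLp.linearEquiv 2 ℝ (q → ℝ)).symm.toLinearMap :
      (q → ℝ) →ₗ[ℝ] (q → ℝ))

lemma projMat_rank {q : Type*} [Fintype q] [DecidableEq q]
    (V : Submodule ℝ (EuclideanSpace ℝ q)) :
    (projMat V).rank = finrank ℝ V := by
  have h1 : (projMat V).mulVecLin
      = ((WithLp.linearEquiv 2 ℝ (q → ℝ)).toLinearMap ∘ₗ
        ((V.subtypeL.comp (V.orthogonalProjectionOnto)).toLinearMap :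
          EuclideanSpace ℝ q →ₗ[ℝ] EuclideanSpace ℝ q) ∘ₗ
        (WithLp.linearEquiv 2 ℝ (q → ℝ)).symm.toLinearMap : (q → ℝ) →ₗ[ℝ] (q → ℝ)) := by
    rw [← Matrix.toLin'_apply', projMat, Matrix.toLin'_toMatrix']
  have h2 : LinearMap.range ((V.subtypeL.comp (orthogonalProjection V)).toLinearMap :
      EuclideanSpace ℝ q →ₗ[ℝ] EuclideanSpace ℝ q) = V := by
    apply le_antisymm
    · rintro x ⟨y, rfl⟩
      exact (orthogonalProjection V y).2
    · intro x hx
      refine ⟨x, ?_⟩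
      have : (orthogonalProjection V x : EuclideanSpace ℝ q) = x :=
        Submodule.eq_starProjection_of_mem_of_inner_eq_zero hx (by simp)
      simpa using this
  show finrank ℝ (LinearMap.range (projMat V).mulVecLin) = finrank ℝ V
  rw [h1, LinearMap.range_comp, LinearMap.range_comp,
    LinearMap.range_eq_top.mpr (LinearEquiv.surjective _), Submodule.map_top, h2]
  exact LinearEquiv.finrank_map_eq _ _

lemma rinner {q : Type*} [Fintype q] (u w : EuclideanSpace ℝ q) :
    inner ℝ u w = ∑ j, u j * w j := by
  simp [PiLp.inner_apply, RCLike.inner_apply, mul_comm]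

/-- If the columns of `X` are partitioned into blocks (block label `c j` for column `j`),
each column of the `i`-th block lies in a linear subspace `S i` of `ℝ^m`, the subspaces
are independent, the `i`-th block `X_i` has `d i` columns and rank `r i`, then the `i`-th
diagonal block of `SIM X` (the principal submatrix indexed by the columns of `X_i`)
has rank `r i`. -/
theorem sim_diagonal_block_rank {m n k : ℕ} (X : Matrix (Fin m) (Fin n) ℝ)
    (S : Fin k → Submodule ℝ (Fin m → ℝ)) (c : Fin n → Fin k)
    (hcol : ∀ j : Fin n, (fun i => X i j) ∈ S (c j))
    (hind : iSupIndep S)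
    (d r : Fin k → ℕ)
    (hd : ∀ i : Fin k, Fintype.card {j : Fin n // c j = i} = d i)
    (hr : ∀ i : Fin k,
      (X.submatrix id (fun a : {j : Fin n // c j = i} => (a : Fin n))).rank = r i) :
    ∀ i : Fin k,
      ((SIM X).submatrix (fun a : {j : Fin n // c j = i} => (a : Fin n))
        (fun a : {j : Fin n // c j = i} => (a : Fin n))).rank = r i := by
  intro i
  set ι : {j : Fin n // c j = i} → Fin n := fun a => (a : Fin n) with hι
  set Y : Matrix (Fin m) ({j : Fin n // c j = i}) ℝ := X.submatrix id ι with hY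
  set U : Submodule ℝ (EuclideanSpace ℝ (Fin n)) :=
    Submodule.span ℝ (Set.range fun s => (WithLp.toLp 2 (X s) : EuclideanSpace ℝ (Fin n))) with hU
  set V : Submodule ℝ (EuclideanSpace ℝ {j : Fin n // c j = i}) :=
    Submodule.span ℝ (Set.range fun s =>
      (WithLp.toLp 2 (Y s) : EuclideanSpace ℝ {j : Fin n // c j = i})) with hV
  -- extension by zero maps V into U
  have hVU : ∀ v ∈ V, extz (fun j => c j = i) v ∈ U := by
    intro v hv
    induction hv using Submodule.span_induction with
    | mem x hx =>
        obtain ⟨s, rfl⟩ := hx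
        have hxe : extz (fun j => c j = i) (WithLp.toLp 2 (Y s))
            = WithLp.toLp 2 (fun j => if c j = i then X s j else 0) := by
          ext j
          by_cases h : c j = i <;> simp [extz, h, hY, hι]
        rw [hxe]
        have hb := Submodule.mem_map_of_mem
          (f := ((WithLp.linearEquiv 2 ℝ (Fin n → ℝ)).symm : (Fin n → ℝ) →ₗ[ℝ] EuclideanSpace ℝ (Fin n)))
          (blockrow_mem X S c hcol hind i s)
        have hUmap : (Submodule.span ℝ (Set.range X)).map
            ((WithLp.linearEquiv 2 ℝ (Fin n → ℝ)).symm : (Fin n → ℝ) →ₗ[ℝ] EuclideanSpace ℝ (Fin n))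
            = U := by
          rw [hU, Submodule.map_span]; congr 1; ext x; simp
          exact ⟨fun ⟨_, ⟨y, rfl⟩, h⟩ => ⟨y, h⟩, fun ⟨y, h⟩ => ⟨X y, ⟨y, rfl⟩, h⟩⟩
        rw [hUmap] at hb
        exact hb
    | zero => rw [map_zero]; exact Submodule.zero_mem U
    | add x y hx hy ihx ihy => rw [map_add]; exact Submodule.add_mem U ihx ihy
    | smul t x hx ih => rw [_root_.map_smul]; exact Submodule.smul_mem U t ih
  -- the key projection identity
  have key : ∀ b : {j : Fin n // c j = i},
      (orthogonalProjection U (WithLp.toLp 2 (Pi.single (ι b) 1)) : EuclideanSpace ℝ (Fin n))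
          = extz (fun j => c j = i)
            (orthogonalProjection V (WithLp.toLp 2 (Pi.single b 1))) := by
    intro b
    apply Submodule.eq_starProjection_of_mem_of_inner_eq_zero
    · exact hVU _ (orthogonalProjection V _).2
    · intro w hw
      induction hw using Submodule.span_induction with
      | mem x hx =>
          obtain ⟨s, rfl⟩ := hx
          set eb : EuclideanSpace ℝ (Fin n) := WithLp.toLp 2 (Pi.single (ι b) 1) with heb
          set eb' : EuclideanSpace ℝ {j : Fin n // c j = i} :=
            WithLp.toLp 2 (Pi.single b 1) with heb'
          set pv : EuclideanSpace ℝ {j : Fin n // c j = i} :=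
            (orthogonalProjection V eb' : EuclideanSpace ℝ {j : Fin n // c j = i}) with hpv
          rw [rinner]
          have hsupp : ∀ j, c j ≠ i →
              (eb - extz (fun j => c j = i) pv) j * X s j = 0 := by
            intro j hj
            have h1 : eb j = 0 := by
              have hne : j ≠ ι b := fun hjb => hj (hjb ▸ b.2)
              simp [heb, hne]
            have h2 : extz (fun j => c j = i) pv j = 0 := by
              simp [extz, hj]
            simp [PiLp.sub_apply, h1, h2]
          rw [sum_block c i _ hsupp]
          have hterm : ∀ a : {j : Fin n // c j = i},
              (eb - extz (fun j => c j = i) pv) (ι a) * X s (ι a)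
                = (eb' - pv) a * Y s a := by
            intro a
            have h1 : eb (ι a) = eb' a := by
              rw [heb, heb']
              simp [hι, Subtype.coe_inj, Pi.single_apply]
            have h2 : extz (fun j => c j = i) pv (ι a) = pv a := by
              simp [extz, hι, a.2]
            have h3 : X s (ι a) = Y s a := rfl
            simp [PiLp.sub_apply, h1, h2, h3]
          rw [Finset.sum_congr rfl fun a _ => hterm a]
          have horth : eb' - pv ∈ Vᗮ := Submodule.sub_starProjection_mem_orthogonal eb'
          have := (Submodule.mem_orthogonal' V _).mp horth
            (WithLp.toLp 2 (Y s)) (Submodule.subset_span ⟨s, rfl⟩)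
          rw [← rinner (eb' - pv) (WithLp.toLp 2 (Y s))]
          exact this
      | zero => simp
      | add x y hx hy ihx ihy => rw [inner_add_right, ihx, ihy, add_zero]
      | smul t x hx ih => rw [real_inner_smul_right, ih, mul_zero]
  -- matrix identity
  have hmat : (SIM X).submatrix ι ι = projMat V := by
    ext a b
    have hSIM : SIM X = projMat U := rfl
    rw [Matrix.submatrix_apply, hSIM, projMat, projMat,
      LinearMap.toMatrix'_apply, LinearMap.toMatrix'_apply]
    have goal' : (orthogonalProjection U (WithLp.toLp 2 (Pi.single (ι b) 1)) :
          EuclideanSpace ℝ (Fin n)) (ι a)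
        = (orthogonalProjection V (WithLp.toLp 2 (Pi.single b 1)) :
            EuclideanSpace ℝ {j : Fin n // c j = i}) a := by
      rw [key b]
      simp [extz, a.2, hι]
    exact goal'
  rw [hmat, projMat_rank]
  rw [← hr i]
  rw [Matrix.rank_eq_finrank_span_row]
  have hVmap : V = (Submodule.span ℝ (Set.range Y)).map
      ((WithLp.linearEquiv 2 ℝ ({j : Fin n // c j = i} → ℝ)).symm : _ →ₗ[ℝ] _) := by
    rw [hV, Submodule.map_span]; congr 1; ext x; simp
    exact ⟨fun ⟨y, h⟩ => ⟨Y y, ⟨y, rfl⟩, h⟩, fun ⟨_, ⟨y, rfl⟩, h⟩ => ⟨y, h⟩⟩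
  rw [hVmap, LinearEquiv.finrank_map_eq]
  rfl
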